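/- The Gaussian isoperimetric profile I_γ = φ ∘ Φ⁻¹ is concave on (0,1). -/

import Mathlib

open Real Set

/-- Standard Gaussian density. -/
noncomputable def phi (t : ℝ) : ℝ := (Real.sqrt (2 * Real.pi))⁻¹ * Real.exp (-t ^ 2 / 2)

/-- Standard Gaussian cumulative distribution function. -/
noncomputable def Phi (t : ℝ) : ℝ := ∫ s in Set.Iic t, phi s

open MeasureTheory intervalIntegral

lemma phi_pos (t : ℝ) : 0 < phi t := by
  apply mul_pos (inv_pos.2 (Real.sqrt_pos.2 (by positivity))) (Real.exp_pos _)

lemma phi_eq (t : ℝ) : phi t = (Real.sqrt (2 * Real.pi))⁻¹ * Real.exp (-(1/2) * t ^ 2) := by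
  rw [phi]; ring_nf

lemma continuous_phi : Continuous phi := by
  unfold phi; fun_prop

lemma integrable_phi : Integrable phi := by
  simp only [funext phi_eq]
  exact (integrable_exp_neg_mul_sq (by norm_num : (0:ℝ) < 1/2)).const_mul _

lemma integral_phi : ∫ t, phi t = 1 := by
  simp only [funext phi_eq]
  rw [MeasureTheory.integral_const_mul, integral_gaussian]
  rw [inv_mul_eq_one₀ (by positivity)]
  rw [show Real.pi / (1/2) = 2 * Real.pi by ring]

lemma hasDerivAt_phi (t : ℝ) : HasDerivAt phi (-t * phi t) t := by
  have h1 : HasDerivAt (fun t : ℝ => -t ^ 2 / 2) (-t) t := by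
    have := ((hasDerivAt_pow 2 t).neg).div_const 2
    simpa using this.congr_deriv (by ring)
  have h2 := (h1.exp).const_mul (Real.sqrt (2 * Real.pi))⁻¹
  exact h2.congr_deriv (by simp only [phi]; ring)

lemma hasDerivAt_Phi (t : ℝ) : HasDerivAt Phi (phi t) t := by
  have key : ∀ x : ℝ, Phi x = Phi 0 + ∫ s in (0:ℝ)..x, phi s := by
    intro x
    rw [← intervalIntegral.integral_Iic_sub_Iic integrable_phi.integrableOn
      integrable_phi.integrableOn]
    simp only [Phi]; ring
  rw [show Phi = fun x => Phi 0 + ∫ s in (0:ℝ)..x, phi s from funext key]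
  exact (intervalIntegral.integral_hasDerivAt_right
    (continuous_phi.intervalIntegrable _ _)
    continuous_phi.aestronglyMeasurable.stronglyMeasurableAtFilter
    continuous_phi.continuousAt).const_add _

lemma strictMono_Phi : StrictMono Phi :=
  strictMono_of_deriv_pos fun x => by
    rw [(hasDerivAt_Phi x).deriv]; exact phi_pos x

lemma Phi_mem_Ioo (t : ℝ) : Phi t ∈ Set.Ioo (0:ℝ) 1 := by
  have hpos : ∀ s : Set ℝ, MeasurableSet s → volume s ≠ 0 → 0 < ∫ x in s, phi x := by
    intro s hs hvs
    rw [MeasureTheory.setIntegral_pos_iff_support_of_nonneg_ae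
      (Filter.Eventually.of_forall fun x => (phi_pos x).le) integrable_phi.integrableOn]
    have : Function.support phi = Set.univ := by
      ext x; simp [Function.mem_support, (phi_pos x).ne']
    rw [this, Set.univ_inter]
    exact hvs.bot_lt
  constructor
  · exact hpos _ measurableSet_Iic (by simp [Real.volume_Iic])
  · have hsplit : Phi t + ∫ x in Set.Ioi t, phi x = 1 := by
      rw [show (1:ℝ) = ∫ x, phi x from integral_phi.symm]
      exact integral_Iic_add_Ioi integrable_phi.integrableOn
        integrable_phi.integrableOn
    have := hpos (Set.Ioi t) measurableSet_Ioi (by simp [Real.volume_Ioi])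
    linarith

/-- The Gaussian isoperimetric profile `I_γ = φ ∘ Φ⁻¹` is concave on (0,1). -/
theorem stmt_1 (Φinv : ℝ → ℝ)
    (hinv : ∀ v ∈ Set.Ioo (0:ℝ) 1, Phi (Φinv v) = v)
    (hinv' : ∀ t : ℝ, Φinv (Phi t) = t) :
    ConcaveOn ℝ (Set.Ioo (0:ℝ) 1) (fun v => phi (Φinv v)) := by
  have hmono : StrictMonoOn Φinv (Set.Ioo (0:ℝ) 1) := by
    intro u hu v hv huv
    by_contra h
    push_neg at h
    have h2 := strictMono_Phi.monotone h
    rw [hinv u hu, hinv v hv] at h2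
    exact absurd h2 (not_le.2 huv)
  have himg : Φinv '' Set.Ioo (0:ℝ) 1 = Set.univ := by
    ext t
    simp only [Set.mem_univ, iff_true, Set.mem_image]
    exact ⟨Phi t, Phi_mem_Ioo t, hinv' t⟩
  have hder : ∀ v ∈ Set.Ioo (0:ℝ) 1,
      HasDerivAt (fun v => phi (Φinv v)) (-Φinv v) v := by
    intro v hv
    have hcont : ContinuousAt Φinv v := by
      refine hmono.continuousAt_of_image_mem_nhds (isOpen_Ioo.mem_nhds hv) ?_
      rw [himg]; exact Filter.univ_mem
    have hΦ : HasDerivAt Φinv (phi (Φinv v))⁻¹ v :=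
      HasDerivAt.of_local_left_inverse hcont (hasDerivAt_Phi (Φinv v)) (phi_pos _).ne'
        ((isOpen_Ioo.eventually_mem hv).mono fun u hu => hinv u hu)
    have := (hasDerivAt_phi (Φinv v)).comp v hΦ
    exact this.congr_deriv
      (by rw [mul_assoc, mul_inv_cancel₀ (phi_pos _).ne', mul_one])
  refine AntitoneOn.concaveOn_of_deriv (convex_Ioo 0 1) ?_ ?_ ?_
  · exact fun v hv => (hder v hv).continuousAt.continuousWithinAt
  · rw [interior_Ioo]
    exact fun v hv => (hder v hv).differentiableAt.differentiableWithinAt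
  · rw [interior_Ioo]
    intro u hu v hv huv
    rw [(hder u hu).deriv, (hder v hv).deriv]
    exact neg_le_neg (hmono.monotoneOn hu hv huv)
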